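/- Let T be a Laver tree with stem τ, A ⊆ T upwards closed, and suppose the canonical Laver ranking satisfies r_{A,T}(τ) < ∞. Then T_A is a Laver tree with stem τ, and every infinite path through T_A meets A (i.e., A ∩ T_A covers T_A). -/

import Mathlib

/-- A tree on ω: a set of finite strings closed under initial segments. -/
def IsTree (T : Set (List ℕ)) : Prop := ∀ σ ∈ T, ∀ ρ : List ℕ, ρ <+: σ → ρ ∈ T

/-- A Laver tree with stem `τ`: a tree containing `τ`, all of whose elements are
comparable with `τ`, and in which every node extending `τ` has infinitely many
immediate children. -/
def IsLaverTree (T : Set (List ℕ)) (τ : List ℕ) : Prop :=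
  IsTree T ∧ τ ∈ T ∧ (∀ σ ∈ T, τ <+: σ ∨ σ <+: τ) ∧
    ∀ σ ∈ T, τ <+: σ → {n : ℕ | σ ++ [n] ∈ T}.Infinite

/-- `A` is upwards closed in the tree `T`. -/
def UpClosed (T A : Set (List ℕ)) : Prop :=
  ∀ σ ∈ A, ∀ ρ ∈ T, σ <+: ρ → ρ ∈ A

/-- The successor function on ω₁ ∪ {∞} (with ∞ + 1 = ∞), modelled on `WithTop Ordinal`. -/
def osucc : WithTop Ordinal → WithTop Ordinal := WithTop.map (· + 1)

/-- An `(A, ω₁ ∪ {∞}, T)` Laver ranking (for a Laver tree `T` with stem `τ`):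
`r σ = 0` iff `σ ∈ A`, and for `σ ∉ A`, `r σ` is the liminf over the children
`σ⌢n ∈ T` of `r (σ⌢n) + 1`, i.e. the least `x` such that infinitely many
children satisfy `r (σ⌢n) + 1 ≤ x`. -/
def IsLaverRanking (T A : Set (List ℕ)) (τ : List ℕ)
    (r : List ℕ → WithTop Ordinal) : Prop :=
  ∀ σ ∈ T, τ <+: σ →
    ((r σ = 0 ↔ σ ∈ A) ∧
      (σ ∉ A → IsLeast {x : WithTop Ordinal |
        {n : ℕ | σ ++ [n] ∈ T ∧ osucc (r (σ ++ [n])) ≤ x}.Infinite} (r σ)))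

/-- The derived tree `T_A`, defined recursively: all initial segments of the stem
`τ` are in; a child `σ⌢n ∈ T` of `σ ∈ T_A` (with `σ ⊇ τ`) is in when
`r (σ⌢n) < r σ < ∞` (with `σ ∉ A`), or when `σ ∈ A` (all children), or when
`r (σ⌢n) = r σ = ∞` (with `σ ∉ A`). -/
inductive InDerived (T A : Set (List ℕ)) (τ : List ℕ)
    (r : List ℕ → WithTop Ordinal) : List ℕ → Prop
  | stem (σ : List ℕ) : σ <+: τ → InDerived T A τ r σ
  | dec (σ : List ℕ) (n : ℕ) : InDerived T A τ r σ → τ <+: σ → σ ∉ A →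
      σ ++ [n] ∈ T → r (σ ++ [n]) < r σ → r σ ≠ ⊤ → InDerived T A τ r (σ ++ [n])
  | mem (σ : List ℕ) (n : ℕ) : InDerived T A τ r σ → τ <+: σ → σ ∈ A →
      σ ++ [n] ∈ T → InDerived T A τ r (σ ++ [n])
  | inf (σ : List ℕ) (n : ℕ) : InDerived T A τ r σ → τ <+: σ → σ ∉ A →
      σ ++ [n] ∈ T → r (σ ++ [n]) = ⊤ → r σ = ⊤ → InDerived T A τ r (σ ++ [n])

/-- The initial segment of length `n` of `f`, as a finite string. -/
def initSeg (f : ℕ → ℕ) (n : ℕ) : List ℕ := List.ofFn fun i : Fin n => f i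

/-- if `T` is a Laver tree with stem `τ`, `A ⊆ T` is upwards closed,
and the canonical Laver ranking has `r τ < ∞`, then the derived tree `T_A` is a
Laver tree with stem `τ` and every infinite path through `T_A` meets `A`. -/
/- auxiliary lemmas -/

lemma osucc_le_iff {a b : WithTop Ordinal} (hb : b ≠ ⊤) : osucc a ≤ b ↔ a < b := by
  cases a with
  | top =>
      have h1 : osucc ⊤ = (⊤ : WithTop Ordinal) := rfl
      rw [h1, top_le_iff]
      simp [hb, lt_top_iff_ne_top, lt_irrefl]
  | coe a => cases b with
    | top => simp at hb
    | coe b => simpa [osucc, ← WithTop.coe_one, ← WithTop.coe_add] using Order.add_one_le_iff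

lemma initSeg_succ (g : ℕ → ℕ) (n : ℕ) : initSeg g (n+1) = initSeg g n ++ [g n] := by
  unfold initSeg
  rw [List.ofFn_succ']; simp [Fin.castSucc]

lemma initSeg_length (g : ℕ → ℕ) (n : ℕ) : (initSeg g n).length = n := by
  simp [initSeg]

lemma initSeg_prefix (g : ℕ → ℕ) {m n : ℕ} (h : m ≤ n) : initSeg g m <+: initSeg g n := by
  induction n with
  | zero => have : m = 0 := Nat.le_zero.mp h; subst this; simp
  | succ k ih =>
    rcases Nat.lt_or_ge m (k+1) with h'|h'
    · refine (ih (by omega)).trans ?_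
      rw [initSeg_succ]; exact ⟨[g k], rfl⟩
    · have : m = k+1 := by omega
      subst this; exact List.prefix_refl _

section main
variable {T A : Set (List ℕ)} {τ : List ℕ} {r : List ℕ → WithTop Ordinal}

lemma InDerived.mem_T (hT : IsLaverTree T τ) {σ : List ℕ}
    (h : InDerived T A τ r σ) : σ ∈ T := by
  induction h with
  | stem σ h => exact hT.1 τ hT.2.1 σ h
  | dec σ n _ _ _ h _ _ _ => exact h
  | mem σ n _ _ _ h _ => exact h
  | inf σ n _ _ _ h _ _ _ => exact h

lemma InDerived.comparable {σ : List ℕ} (h : InDerived T A τ r σ) :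
    τ <+: σ ∨ σ <+: τ := by
  induction h with
  | stem σ h => exact Or.inr h
  | dec σ n _ hτσ _ _ _ _ _ => exact Or.inl (hτσ.trans ⟨[n], rfl⟩)
  | mem σ n _ hτσ _ _ _ => exact Or.inl (hτσ.trans ⟨[n], rfl⟩)
  | inf σ n _ hτσ _ _ _ _ _ => exact Or.inl (hτσ.trans ⟨[n], rfl⟩)

lemma InDerived.prefix_closed {σ : List ℕ} (h : InDerived T A τ r σ)
    {ρ : List ℕ} (hp : ρ <+: σ) : InDerived T A τ r ρ := by
  induction h generalizing ρ with
  | stem σ h => exact .stem ρ (hp.trans h)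
  | dec σ n h1 h2 h3 h4 h5 h6 ih =>
      rcases List.prefix_concat_iff.mp hp with h'|h'
      · subst h'; exact .dec σ n h1 h2 h3 h4 h5 h6
      · exact ih h'
  | mem σ n h1 h2 h3 h4 ih =>
      rcases List.prefix_concat_iff.mp hp with h'|h'
      · subst h'; exact .mem σ n h1 h2 h3 h4
      · exact ih h'
  | inf σ n h1 h2 h3 h4 h5 h6 ih =>
      rcases List.prefix_concat_iff.mp hp with h'|h'
      · subst h'; exact .inf σ n h1 h2 h3 h4 h5 h6
      · exact ih h'

lemma InDerived.rank_ne_top (hT : IsLaverTree T τ) (hAT : A ⊆ T) (hA : UpClosed T A)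
    (hr : IsLaverRanking T A τ r) (hτ : r τ ≠ ⊤) {σ : List ℕ}
    (h : InDerived T A τ r σ) (hτσ : τ <+: σ) : r σ ≠ ⊤ := by
  induction h with
  | stem σ h =>
      have : σ = τ := h.eq_of_length_le (hτσ.length_le)
      subst this; exact hτ
  | dec σ n h1 h2 h3 h4 h5 h6 ih => exact ne_top_of_lt h5
  | mem σ n h1 h2 h3 h4 ih =>
      have hmem : σ ++ [n] ∈ A := hA σ h3 (σ ++ [n]) h4 ⟨[n], rfl⟩
      have := (hr (σ ++ [n]) h4 (h2.trans ⟨[n], rfl⟩)).1.mpr hmem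
      rw [this]; exact WithTop.zero_ne_top
  | inf σ n h1 h2 h3 h4 h5 h6 ih => exact absurd h6 (ih h2)

lemma InDerived.rank_lt {σ : List ℕ} {n : ℕ}
    (h : InDerived T A τ r (σ ++ [n])) (hσA : σ ∉ A) (hlen : τ.length ≤ σ.length)
    (hne : r σ ≠ ⊤) : r (σ ++ [n]) < r σ := by
  generalize hE : σ ++ [n] = u at h
  cases h with
  | stem ρ h =>
      have h1 := h.length_le
      rw [← hE] at h1
      simp at h1
      omega
  | dec σ' n' h1 h2 h3 h4 h5 h6 =>
      obtain ⟨h7, h8⟩ : σ' = σ ∧ n' = n := by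
        have := List.append_inj' hE.symm rfl
        simpa using this
      subst h7; subst h8; rwa [hE] at h5
  | mem σ' n' h1 h2 h3 h4 =>
      obtain ⟨h7, h8⟩ : σ' = σ ∧ n' = n := by
        have := List.append_inj' hE.symm rfl
        simpa using this
      subst h7; exact absurd h3 hσA
  | inf σ' n' h1 h2 h3 h4 h5 h6 =>
      obtain ⟨h7, h8⟩ : σ' = σ ∧ n' = n := by
        have := List.append_inj' hE.symm rfl
        simpa using this
      subst h7; exact absurd h6 hne

end main

theorem derived_tree_covered_by_A (T A : Set (List ℕ)) (τ : List ℕ)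
    (hT : IsLaverTree T τ) (hAT : A ⊆ T) (hA : UpClosed T A)
    (r : List ℕ → WithTop Ordinal) (hr : IsLaverRanking T A τ r)
    (hτ : r τ ≠ ⊤) :
    IsLaverTree {σ | InDerived T A τ r σ} τ ∧
      ∀ g : ℕ → ℕ, (∀ n, InDerived T A τ r (initSeg g n)) →
        ∃ n, initSeg g n ∈ A := by

  constructor
  · refine ⟨fun σ hσ ρ hρ => hσ.prefix_closed hρ, .stem τ (List.prefix_refl τ),
      fun σ hσ => hσ.comparable, fun σ hσ hτσ => ?_⟩
    -- infinitely many children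
    by_cases hmem : σ ∈ A
    · have hST : σ ∈ T := hσ.mem_T hT
      have hinf := hT.2.2.2 σ hST hτσ
      refine hinf.mono fun n hn => ?_
      exact .mem σ n hσ hτσ hmem hn
    · have hST : σ ∈ T := hσ.mem_T hT
      have hrs := (hr σ hST hτσ).2 hmem
      have hne : r σ ≠ ⊤ := hσ.rank_ne_top hT hAT hA hr hτ hτσ
      have hinf := hrs.1
      refine hinf.mono fun n hn => ?_
      exact .dec σ n hσ hτσ hmem hn.1 ((osucc_le_iff hne).mp hn.2) hne
  · intro g hg
    by_contra hno
    push_neg at hno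
    have hτeq : initSeg g τ.length = τ := by
      rcases (hg τ.length).comparable with h|h
      · exact (h.eq_of_length_le (by rw [initSeg_length])).symm
      · exact h.eq_of_length_le (by rw [initSeg_length])
    have hτpre : ∀ k, τ <+: initSeg g (τ.length + k) := fun k => by
      have := initSeg_prefix g (Nat.le_add_right τ.length k)
      rwa [hτeq] at this
    have hdec : ∀ k, r (initSeg g (τ.length + k + 1)) < r (initSeg g (τ.length + k)) := by
      intro k
      have h := hg (τ.length + k + 1)
      rw [show τ.length + k + 1 = (τ.length + k) + 1 from rfl, initSeg_succ] at h
      have hne : r (initSeg g (τ.length + k)) ≠ ⊤ :=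
        (hg _).rank_ne_top hT hAT hA hr hτ (hτpre k)
      rw [show τ.length + k + 1 = (τ.length + k) + 1 from rfl, initSeg_succ]
      exact h.rank_lt (hno _) (by rw [initSeg_length]; omega) hne
    exact (RelEmbedding.natGT (fun k => r (initSeg g (τ.length + k))) hdec).not_wellFounded wellFounded_lt
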